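/- Let G be a sharply 2-transitive group on Ω (#Ω ≥ 2) with distinct base points ω₀, ω₁. Define α +₀ β := a(β), where a ∈ A is the unique element with a(ω₀) = α, and define α ·₁ β := g(β) where g ∈ G_{ω₀} is unique with g(ω₁) = α when α ≠ ω₀, and α ·₁ β := ω₀ when α = ω₀ or β = ω₀. Then (Ω, +₀, ·₁) is a neardomain with 0 = ω₀ and 1 = ω₁. -/

import Mathlib

/-- A neardomain `(F, +, ·)`: `(F, +)` is a loop with neutral element `zero`
in which `a + b = 0 → b + a = 0`; `(F \ {0}, ·)` is a group with neutral
element `one`; `0·a = 0`; multiplication is left distributive over addition;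
and for all `a, b` there is `d_{a,b} ≠ 0` with
`a + (b + x) = (a + b) + d_{a,b}·x` for all `x`. -/
structure Neardomain (F : Type*) where
  add : F → F → F
  mul : F → F → F
  zero : F
  one : F
  zero_add : ∀ a, add zero a = a
  add_zero : ∀ a, add a zero = a
  addL : ∀ a b, ∃! x, add a x = b
  addR : ∀ a b, ∃! y, add y a = b
  neg_comm : ∀ a b, add a b = zero → add b a = zero
  one_ne_zero : one ≠ zero
  mul_ne_zero : ∀ a b, a ≠ zero → b ≠ zero → mul a b ≠ zero
  mul_assoc : ∀ a b c, a ≠ zero → b ≠ zero → c ≠ zero →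
    mul (mul a b) c = mul a (mul b c)
  one_mul : ∀ a, a ≠ zero → mul one a = a
  mul_one : ∀ a, a ≠ zero → mul a one = a
  inv_ex : ∀ a, a ≠ zero → ∃ b, b ≠ zero ∧ mul a b = one ∧ mul b a = one
  zero_mul : ∀ a, mul zero a = zero
  left_distrib : ∀ a b c, mul a (add b c) = add (mul a b) (mul a c)
  d_ex : ∀ a b, ∃ d, d ≠ zero ∧ ∀ x, add a (add b x) = add (add a b) (mul d x)

/-- Let `G` be sharply 2-transitive on `Ω` with distinct base
points `ω₀, ω₁`, and let `A` be the associated set (`A = J∘ν` if `char G ≠ 2`,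
`A = J ∪ {1} = {g | g² = 1}` if `char G = 2`).  Defining
`α +₀ β = a(β)` for the unique `a ∈ A` with `a(ω₀) = α`, and
`α ·₁ β = g(β)` for the unique `g` in the stabilizer of `ω₀` with
`g(ω₁) = α` (and `α ·₁ β = ω₀` when `α = ω₀` or `β = ω₀`),
the triple `(Ω, +₀, ·₁)` is a neardomain with `0 = ω₀` and `1 = ω₁`. -/
theorem stmt17 {Ω : Type*} (G : Subgroup (Equiv.Perm Ω))
    (hsharp : ∀ α₁ α₂ β₁ β₂ : Ω, α₁ ≠ α₂ → β₁ ≠ β₂ →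
      ∃! g : G, (g : Equiv.Perm Ω) α₁ = β₁ ∧ (g : Equiv.Perm Ω) α₂ = β₂)
    (ω₀ ω₁ : Ω) (hω : ω₀ ≠ ω₁)
    (A : Set G)
    -- if char G ≠ 2, i.e. there is an involution ν fixing ω₀, then A = J∘ν
    (hA1 : ∀ ν : G, ν ^ 2 = 1 → ν ≠ 1 → (ν : Equiv.Perm Ω) ω₀ = ω₀ →
      A = {g : G | ∃ j : G, j ^ 2 = 1 ∧ j ≠ 1 ∧ g = j * ν})
    -- if char G = 2, i.e. all involutions are fixed-point-free, then A = J ∪ {1}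
    (hA2 : (∀ j : G, j ^ 2 = 1 → j ≠ 1 → ∀ x : Ω, (j : Equiv.Perm Ω) x ≠ x) →
      A = {g : G | g ^ 2 = 1})
    (add : Ω → Ω → Ω)
    (hadd : ∀ a : G, a ∈ A → ∀ β : Ω,
      add ((a : Equiv.Perm Ω) ω₀) β = (a : Equiv.Perm Ω) β)
    (mul : Ω → Ω → Ω)
    (hmul1 : ∀ g : G, (g : Equiv.Perm Ω) ω₀ = ω₀ → ∀ β : Ω,
      mul ((g : Equiv.Perm Ω) ω₁) β = (g : Equiv.Perm Ω) β)
    (hmul0 : ∀ β : Ω, mul ω₀ β = ω₀) :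
    ∃ D : Neardomain Ω,
      D.add = add ∧ D.mul = mul ∧ D.zero = ω₀ ∧ D.one = ω₁ := by
  classical
  -- notation for the permutation underlying a group element
  have coe_ext : ∀ a b : G, (∀ x : Ω, (a : Equiv.Perm Ω) x = (b : Equiv.Perm Ω) x) → a = b :=
    fun a b h => Subtype.ext (Equiv.ext h)
  have conj_sq : ∀ g k : G, (g * k * g⁻¹) ^ 2 = g * k ^ 2 * g⁻¹ := by
    intro g k; simp [pow_two, mul_assoc]
  have conj_sq' : ∀ g k : G, (g⁻¹ * k * g) ^ 2 = g⁻¹ * k ^ 2 * g := by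
    intro g k; simp [pow_two, mul_assoc]
  have inv_fix : ∀ (g : G) (x : Ω), (g : Equiv.Perm Ω) x = x →
      ((g : Equiv.Perm Ω))⁻¹ x = x := by
    intro g x h
    calc ((g : Equiv.Perm Ω))⁻¹ x
        = ((g : Equiv.Perm Ω))⁻¹ ((g : Equiv.Perm Ω) x) := by rw [h]
    _ = x := (g : Equiv.Perm Ω).symm_apply_apply x
  -- L0 : an element fixing two distinct points is the identity
  have L0 : ∀ (g : G) (α β : Ω), α ≠ β → (g : Equiv.Perm Ω) α = α →
      (g : Equiv.Perm Ω) β = β → g = 1 := by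
    intro g α β hab h1 h2
    obtain ⟨u, _, hu⟩ := hsharp α β α β hab hab
    have e1 := hu g ⟨h1, h2⟩
    have e2 := hu 1 ⟨by simp, by simp⟩
    rw [e1, e2]
  -- L1 : for distinct α β there is an involution swapping them
  have L1 : ∀ α β : Ω, α ≠ β → ∃ j : G, j ^ 2 = 1 ∧ j ≠ 1 ∧
      (j : Equiv.Perm Ω) α = β ∧ (j : Equiv.Perm Ω) β = α := by
    intro α β h
    obtain ⟨g, ⟨hg1, hg2⟩, _⟩ := hsharp α β β α h h.symm
    refine ⟨g, ?_, ?_, hg1, hg2⟩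
    · exact L0 (g ^ 2) α β h (by simp [pow_two, Equiv.Perm.mul_apply, hg1, hg2])
        (by simp [pow_two, Equiv.Perm.mul_apply, hg1, hg2])
    · intro hg
      apply h
      rw [← hg1, hg]; simp
  -- L1u : uniqueness of an involution sending α to β (α ≠ β)
  have L1u : ∀ α β : Ω, α ≠ β → ∀ j j' : G, j ^ 2 = 1 → j' ^ 2 = 1 →
      (j : Equiv.Perm Ω) α = β → (j' : Equiv.Perm Ω) α = β → j = j' := by
    intro α β h j j' hj hj' hjα hj'α
    have hback : ∀ k : G, k ^ 2 = 1 → (k : Equiv.Perm Ω) α = β →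
        (k : Equiv.Perm Ω) β = α := by
      intro k hk hkα
      have : ((k ^ 2 : G) : Equiv.Perm Ω) α = α := by rw [hk]; simp
      rw [pow_two] at this
      simpa [Equiv.Perm.mul_apply, hkα] using this
    obtain ⟨u, _, hu⟩ := hsharp α β β α h h.symm
    rw [hu j ⟨hjα, hback j hj hjα⟩, hu j' ⟨hj'α, hback j' hj' hj'α⟩]
  -- L2 : transitivity : some element sends δ to ω₀
  have L2 : ∀ δ : Ω, ∃ g : G, (g : Equiv.Perm Ω) δ = ω₀ := by
    intro δ
    by_cases hδ : δ = ω₀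
    · exact ⟨1, by simp [hδ]⟩
    · obtain ⟨g, ⟨hg1, _⟩, _⟩ := hsharp δ ω₀ ω₀ δ hδ (Ne.symm hδ)
      exact ⟨g, hg1⟩
  -- the four key properties of A
  have key : (1 : G) ∈ A ∧
      (∀ α β : Ω, ∃! a : G, a ∈ A ∧ (a : Equiv.Perm Ω) α = β) ∧
      (∀ a : G, a ∈ A → a⁻¹ ∈ A) ∧
      (∀ g : G, (g : Equiv.Perm Ω) ω₀ = ω₀ → ∀ a : G, a ∈ A → g * a * g⁻¹ ∈ A) := by
    by_cases hchar : ∀ j : G, j ^ 2 = 1 → j ≠ 1 → ∀ x : Ω, (j : Equiv.Perm Ω) x ≠ x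
    · -- characteristic 2 : A = {g | g ^ 2 = 1}
      have hAeq := hA2 hchar
      have hmem : ∀ a : G, a ∈ A ↔ a ^ 2 = 1 := by
        intro a; rw [hAeq]; rfl
      refine ⟨(hmem 1).2 (by simp), ?_, ?_, ?_⟩
      · intro α β
        by_cases hab : α = β
        · subst hab
          refine ⟨1, ⟨(hmem 1).2 (by simp), by simp⟩, ?_⟩
          rintro a ⟨haA, haα⟩
          by_contra hne
          exact hchar a ((hmem a).1 haA) hne α haα
        · obtain ⟨j, hj2, _, hjα, _⟩ := L1 α β hab
          refine ⟨j, ⟨(hmem j).2 hj2, hjα⟩, ?_⟩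
          rintro a ⟨haA, haα⟩
          exact L1u α β hab a j ((hmem a).1 haA) hj2 haα hjα
      · intro a ha
        rw [hmem] at ha ⊢
        rw [inv_pow, ha, inv_one]
      · intro g _ a ha
        rw [hmem] at ha ⊢
        rw [conj_sq, ha]; simp
    · -- characteristic ≠ 2 : there is an involution with a fixed point
      push_neg at hchar
      obtain ⟨j₀, hj₀2, hj₀ne, δ, hδ⟩ := hchar
      obtain ⟨g₀, hg₀⟩ := L2 δ
      set ν : G := g₀ * j₀ * g₀⁻¹ with hν
      have hν2 : ν ^ 2 = 1 := by
        rw [hν, conj_sq, hj₀2]; simp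
      have hνne : ν ≠ 1 := by
        intro h
        apply hj₀ne
        have : g₀⁻¹ * (g₀ * j₀ * g₀⁻¹) * g₀ = g₀⁻¹ * 1 * g₀ := by rw [← hν, h]
        simpa [mul_assoc] using this
      have hνfix : (ν : Equiv.Perm Ω) ω₀ = ω₀ := by
        have : (ν : Equiv.Perm Ω) ((g₀ : Equiv.Perm Ω) δ) = (g₀ : Equiv.Perm Ω) δ := by
          simp [hν, Equiv.Perm.mul_apply, hδ]
        rwa [hg₀] at this
      have hAeq := hA1 ν hν2 hνne hνfix
      have hmem : ∀ a : G, a ∈ A ↔ ∃ j : G, j ^ 2 = 1 ∧ j ≠ 1 ∧ a = j * ν := by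
        intro a; rw [hAeq]; rfl
      -- uniqueness of involutions fixing ω₀, via hadd
      have Uniq0 : ∀ j j' : G, j ^ 2 = 1 → j ≠ 1 → j' ^ 2 = 1 → j' ≠ 1 →
          (j : Equiv.Perm Ω) ω₀ = ω₀ → (j' : Equiv.Perm Ω) ω₀ = ω₀ → j = j' := by
        intro j j' hj2 hjne hj'2 hj'ne hjfix hj'fix
        have hjA : j * ν ∈ A := (hmem _).2 ⟨j, hj2, hjne, rfl⟩
        have hj'A : j' * ν ∈ A := (hmem _).2 ⟨j', hj'2, hj'ne, rfl⟩
        have hjω : ((j * ν : G) : Equiv.Perm Ω) ω₀ = ω₀ := by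
          simp [Equiv.Perm.mul_apply, hνfix, hjfix]
        have hj'ω : ((j' * ν : G) : Equiv.Perm Ω) ω₀ = ω₀ := by
          simp [Equiv.Perm.mul_apply, hνfix, hj'fix]
        have heq : j * ν = j' * ν := by
          apply coe_ext
          intro x
          have e1 := hadd (j * ν) hjA x
          have e2 := hadd (j' * ν) hj'A x
          rw [hjω] at e1; rw [hj'ω] at e2
          rw [← e1, ← e2]
        exact mul_right_cancel heq
      -- no two distinct involutions share any fixed point
      have UniqAny : ∀ (δ' : Ω) (j j' : G), j ^ 2 = 1 → j ≠ 1 → j' ^ 2 = 1 → j' ≠ 1 →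
          (j : Equiv.Perm Ω) δ' = δ' → (j' : Equiv.Perm Ω) δ' = δ' → j = j' := by
        intro δ' j j' hj2 hjne hj'2 hj'ne hjfix hj'fix
        obtain ⟨g, hg⟩ := L2 δ'
        have conjfix : ∀ k : G, (k : Equiv.Perm Ω) δ' = δ' →
            ((g * k * g⁻¹ : G) : Equiv.Perm Ω) ω₀ = ω₀ := by
          intro k hk
          have : ((g * k * g⁻¹ : G) : Equiv.Perm Ω) ((g : Equiv.Perm Ω) δ')
              = (g : Equiv.Perm Ω) δ' := by simp [Equiv.Perm.mul_apply, hk]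
          rwa [hg] at this
        have conj2 : ∀ k : G, k ^ 2 = 1 → (g * k * g⁻¹) ^ 2 = 1 := by
          intro k hk
          rw [conj_sq, hk]; simp
        have conjne : ∀ k : G, k ≠ 1 → g * k * g⁻¹ ≠ 1 := by
          intro k hk h
          apply hk
          have : g⁻¹ * (g * k * g⁻¹) * g = g⁻¹ * 1 * g := by rw [h]
          simpa [mul_assoc] using this
        have := Uniq0 (g * j * g⁻¹) (g * j' * g⁻¹) (conj2 j hj2) (conjne j hjne)
          (conj2 j' hj'2) (conjne j' hj'ne) (conjfix j hjfix) (conjfix j' hj'fix)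
        have h2 : g⁻¹ * (g * j * g⁻¹) * g = g⁻¹ * (g * j' * g⁻¹) * g := by rw [this]
        simpa [mul_assoc] using h2
      have h1A : (1 : G) ∈ A := by
        refine (hmem 1).2 ⟨ν, hν2, hνne, ?_⟩
        rw [← pow_two, hν2]
      refine ⟨h1A, ?_, ?_, ?_⟩
      · -- regularity
        intro α β
        set γ := (ν : Equiv.Perm Ω) α with hγ
        by_cases hgb : γ = β
        · -- need the unique involution fixing γ
          obtain ⟨g, hg⟩ := L2 γ
          have hg' : ((g : Equiv.Perm Ω))⁻¹ ω₀ = γ := by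
            rw [← hg]
            exact (g : Equiv.Perm Ω).symm_apply_apply γ
          set j : G := g⁻¹ * ν * g with hj
          have hj2 : j ^ 2 = 1 := by
            rw [hj, conj_sq', hν2]; simp
          have hjne : j ≠ 1 := by
            intro h
            apply hνne
            have : g * (g⁻¹ * ν * g) * g⁻¹ = g * 1 * g⁻¹ := by rw [← hj, h]
            simpa [mul_assoc] using this
          have hjfix : (j : Equiv.Perm Ω) γ = γ := by
            rw [hj]
            simp [Equiv.Perm.mul_apply, hg, hνfix, hg']
          refine ⟨j * ν, ⟨(hmem _).2 ⟨j, hj2, hjne, rfl⟩, ?_⟩, ?_⟩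
          · show ((j * ν : G) : Equiv.Perm Ω) α = β
            rw [← hgb]
            simp [Equiv.Perm.mul_apply, ← hγ, hjfix]
          · rintro a ⟨haA, haα⟩
            obtain ⟨jw, hjw2, hjwne, rfl⟩ := (hmem a).1 haA
            have : (jw : Equiv.Perm Ω) γ = γ := by
              have : ((jw * ν : G) : Equiv.Perm Ω) α = β := haα
              rw [← hgb] at this
              simpa [Equiv.Perm.mul_apply, ← hγ] using this
            rw [UniqAny γ jw j hjw2 hjwne hj2 hjne this hjfix]
        · obtain ⟨j, hj2, hjne, hjγ, _⟩ := L1 γ β hgb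
          refine ⟨j * ν, ⟨(hmem _).2 ⟨j, hj2, hjne, rfl⟩, ?_⟩, ?_⟩
          · show ((j * ν : G) : Equiv.Perm Ω) α = β
            simp [Equiv.Perm.mul_apply, ← hγ, hjγ]
          · rintro a ⟨haA, haα⟩
            obtain ⟨jw, hjw2, hjwne, rfl⟩ := (hmem a).1 haA
            have hjwγ : (jw : Equiv.Perm Ω) γ = β := by
              have : ((jw * ν : G) : Equiv.Perm Ω) α = β := haα
              simpa [Equiv.Perm.mul_apply, ← hγ] using this
            rw [L1u γ β hgb jw j hjw2 hj2 hjwγ hjγ]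
      · -- closure under inverse
        intro a ha
        obtain ⟨j, hj2, hjne, rfl⟩ := (hmem a).1 ha
        have hνinv : ν⁻¹ = ν := by
          rw [inv_eq_iff_mul_eq_one, ← pow_two, hν2]
        have hjinv : j⁻¹ = j := by
          rw [inv_eq_iff_mul_eq_one, ← pow_two, hj2]
        refine (hmem _).2 ⟨ν * j * ν⁻¹, ?_, ?_, ?_⟩
        · rw [conj_sq, hj2]; simp
        · intro h
          apply hjne
          have : ν⁻¹ * (ν * j * ν⁻¹) * ν = ν⁻¹ * 1 * ν := by rw [h]
          simpa [mul_assoc] using this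
        · calc (j * ν)⁻¹ = ν⁻¹ * j⁻¹ := mul_inv_rev j ν
          _ = ν * j := by rw [hνinv, hjinv]
          _ = ν * j * ν⁻¹ * ν := (inv_mul_cancel_right (ν * j) ν).symm
      · -- closure under conjugation by stabilizer elements
        intro g hgfix a ha
        obtain ⟨j, hj2, hjne, rfl⟩ := (hmem a).1 ha
        have conj2 : (g * ν * g⁻¹) ^ 2 = 1 := by
          rw [conj_sq, hν2]; simp
        have conjne : g * ν * g⁻¹ ≠ 1 := by
          intro h
          apply hνne
          have : g⁻¹ * (g * ν * g⁻¹) * g = g⁻¹ * 1 * g := by rw [h]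
          simpa [mul_assoc] using this
        have hginvfix : ((g⁻¹ : G) : Equiv.Perm Ω) ω₀ = ω₀ := by
          calc ((g⁻¹ : G) : Equiv.Perm Ω) ω₀
              = ((g⁻¹ : G) : Equiv.Perm Ω) ((g : Equiv.Perm Ω) ω₀) := by rw [hgfix]
          _ = ω₀ := by simp
        have conjfix : ((g * ν * g⁻¹ : G) : Equiv.Perm Ω) ω₀ = ω₀ := by
          simp [Equiv.Perm.mul_apply, inv_fix g ω₀ hgfix, hνfix, hgfix]
        have hνconj : g * ν * g⁻¹ = ν := Uniq0 _ _ conj2 conjne hν2 hνne conjfix hνfix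
        refine (hmem _).2 ⟨g * j * g⁻¹, ?_, ?_, ?_⟩
        · rw [conj_sq, hj2]; simp
        · intro h
          apply hjne
          have : g⁻¹ * (g * j * g⁻¹) * g = g⁻¹ * 1 * g := by rw [h]
          simpa [mul_assoc] using this
        · have e1 : g * (j * ν) * g⁻¹ = (g * j * g⁻¹) * (g * ν * g⁻¹) := by
            simp [mul_assoc]
          rw [e1, hνconj]
  obtain ⟨h1A, reg, hinvA, hconjA⟩ := key
  -- the canonical element of A sending ω₀ to α
  choose aelt haspec using fun α : Ω => (reg ω₀ α).exists
  have haA : ∀ α : Ω, aelt α ∈ A := fun α => (haspec α).1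
  have haω : ∀ α : Ω, ((aelt α : G) : Equiv.Perm Ω) ω₀ = α := fun α => (haspec α).2
  have haU : ∀ (α : Ω) (a : G), a ∈ A → (a : Equiv.Perm Ω) ω₀ = α → a = aelt α := by
    intro α a ha h
    exact ((reg ω₀ α).unique ⟨ha, h⟩ ⟨haA α, haω α⟩)
  have add_eq : ∀ α β : Ω, add α β = ((aelt α : G) : Equiv.Perm Ω) β := by
    intro α β
    have := hadd (aelt α) (haA α) β
    rwa [haω α] at this
  have aelt_zero : aelt ω₀ = 1 := (haU ω₀ 1 h1A (by simp)).symm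
  -- existence of stabilizer elements
  have gex : ∀ α : Ω, α ≠ ω₀ → ∃ g : G, (g : Equiv.Perm Ω) ω₀ = ω₀ ∧
      (g : Equiv.Perm Ω) ω₁ = α := by
    intro α hα
    obtain ⟨g, hg, _⟩ := hsharp ω₀ ω₁ ω₀ α hω (Ne.symm hα)
    exact ⟨g, hg⟩
  have mul_eq : ∀ (g : G), (g : Equiv.Perm Ω) ω₀ = ω₀ → ∀ β : Ω,
      mul ((g : Equiv.Perm Ω) ω₁) β = (g : Equiv.Perm Ω) β := hmul1
  -- Neardomain fields
  have f_zero_add : ∀ a, add ω₀ a = a := by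
    intro a; rw [add_eq, aelt_zero]; simp
  have f_add_zero : ∀ a, add a ω₀ = a := by
    intro a; rw [add_eq]; exact haω a
  have f_addL : ∀ a b, ∃! x, add a x = b := by
    intro a b
    refine ⟨((aelt a : G) : Equiv.Perm Ω).symm b, ?_, ?_⟩
    · show add a _ = b
      rw [add_eq]; simp
    · intro x hx
      rw [add_eq] at hx
      simp [Equiv.eq_symm_apply, hx]
  have f_addR : ∀ a b, ∃! y, add y a = b := by
    intro a b
    obtain ⟨c, ⟨hcA, hca⟩, hcu⟩ := reg a b
    refine ⟨(c : Equiv.Perm Ω) ω₀, ?_, ?_⟩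
    · show add _ a = b
      rw [add_eq, ← haU _ c hcA rfl]
      exact hca
    · intro y hy
      rw [add_eq] at hy
      rw [← hcu (aelt y) ⟨haA y, hy⟩, haω y]
  have f_neg_comm : ∀ a b, add a b = ω₀ → add b a = ω₀ := by
    intro a b h
    rw [add_eq] at h ⊢
    have hinv : ((aelt a)⁻¹ : G) = aelt b := by
      apply haU
      · exact hinvA _ (haA a)
      · calc (((aelt a)⁻¹ : G) : Equiv.Perm Ω) ω₀
            = (((aelt a)⁻¹ : G) : Equiv.Perm Ω) (((aelt a : G) : Equiv.Perm Ω) b) := by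
              rw [h]
        _ = b := by simp
    rw [← hinv]
    calc (((aelt a)⁻¹ : G) : Equiv.Perm Ω) a
        = (((aelt a)⁻¹ : G) : Equiv.Perm Ω) (((aelt a : G) : Equiv.Perm Ω) ω₀) := by
          rw [haω a]
    _ = ω₀ := by simp
  have f_mul_ne_zero : ∀ a b, a ≠ ω₀ → b ≠ ω₀ → mul a b ≠ ω₀ := by
    intro a b ha hb
    obtain ⟨g, hg0, hg1⟩ := gex a ha
    rw [← hg1, mul_eq g hg0]
    intro h
    apply hb
    have : (g : Equiv.Perm Ω) b = (g : Equiv.Perm Ω) ω₀ := by rw [h, hg0]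
    exact (g : Equiv.Perm Ω).injective this
  have f_mul_assoc : ∀ a b c, a ≠ ω₀ → b ≠ ω₀ → c ≠ ω₀ →
      mul (mul a b) c = mul a (mul b c) := by
    intro a b c ha hb _
    obtain ⟨g, hg0, hg1⟩ := gex a ha
    obtain ⟨h, hh0, hh1⟩ := gex b hb
    have hgh0 : ((g * h : G) : Equiv.Perm Ω) ω₀ = ω₀ := by
      simp [Equiv.Perm.mul_apply, hh0, hg0]
    have hab : mul a b = ((g * h : G) : Equiv.Perm Ω) ω₁ := by
      rw [← hg1, mul_eq g hg0, ← hh1]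
      simp [Equiv.Perm.mul_apply]
    rw [hab, mul_eq (g * h) hgh0, ← hh1, mul_eq h hh0, ← hg1, mul_eq g hg0]
    simp [Equiv.Perm.mul_apply]
  have f_one_mul : ∀ a, mul ω₁ a = a := by
    intro a
    have := hmul1 1 (by simp) a
    simpa using this
  have f_mul_one : ∀ a, a ≠ ω₀ → mul a ω₁ = a := by
    intro a ha
    obtain ⟨g, hg0, hg1⟩ := gex a ha
    rw [← hg1, mul_eq g hg0, hg1]
  have f_inv_ex : ∀ a, a ≠ ω₀ → ∃ b, b ≠ ω₀ ∧ mul a b = ω₁ ∧ mul b a = ω₁ := by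
    intro a ha
    obtain ⟨g, hg0, hg1⟩ := gex a ha
    have hginv0 : ((g⁻¹ : G) : Equiv.Perm Ω) ω₀ = ω₀ := by
      calc ((g⁻¹ : G) : Equiv.Perm Ω) ω₀
          = ((g⁻¹ : G) : Equiv.Perm Ω) ((g : Equiv.Perm Ω) ω₀) := by rw [hg0]
      _ = ω₀ := by simp
    refine ⟨((g⁻¹ : G) : Equiv.Perm Ω) ω₁, ?_, ?_, ?_⟩
    · intro hcon
      apply hω
      have : ((g⁻¹ : G) : Equiv.Perm Ω) ω₁ = ((g⁻¹ : G) : Equiv.Perm Ω) ω₀ := by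
        rw [hcon, hginv0]
      exact (((g⁻¹ : G) : Equiv.Perm Ω).injective this).symm
    · rw [← hg1, mul_eq g hg0]
      simp
    · rw [mul_eq g⁻¹ hginv0, ← hg1]
      simp
  have f_left_distrib : ∀ a b c, mul a (add b c) = add (mul a b) (mul a c) := by
    intro a b c
    by_cases ha : a = ω₀
    · subst ha
      rw [hmul0, hmul0, hmul0, f_zero_add]
    · obtain ⟨g, hg0, hg1⟩ := gex a ha
      have hginv0 : ((g⁻¹ : G) : Equiv.Perm Ω) ω₀ = ω₀ := by
        calc ((g⁻¹ : G) : Equiv.Perm Ω) ω₀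
            = ((g⁻¹ : G) : Equiv.Perm Ω) ((g : Equiv.Perm Ω) ω₀) := by rw [hg0]
        _ = ω₀ := by simp
      have hconj : g * aelt b * g⁻¹ = aelt ((g : Equiv.Perm Ω) b) := by
        apply haU
        · exact hconjA g hg0 _ (haA b)
        · calc ((g * aelt b * g⁻¹ : G) : Equiv.Perm Ω) ω₀
              = (g : Equiv.Perm Ω) (((aelt b : G) : Equiv.Perm Ω)
                (((g⁻¹ : G) : Equiv.Perm Ω) ω₀)) := by simp [Equiv.Perm.mul_apply]
          _ = (g : Equiv.Perm Ω) b := by rw [hginv0, haω b]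
      rw [← hg1, mul_eq g hg0, mul_eq g hg0, mul_eq g hg0, add_eq, add_eq, ← hconj]
      simp [Equiv.Perm.mul_apply]
  have f_d_ex : ∀ a b, ∃ d, d ≠ ω₀ ∧ ∀ x, add a (add b x) = add (add a b) (mul d x) := by
    intro a b
    set γ := add a b with hγ
    set h : G := (aelt γ)⁻¹ * (aelt a * aelt b) with hh
    have hh0 : (h : Equiv.Perm Ω) ω₀ = ω₀ := by
      have h1 : ((aelt a * aelt b : G) : Equiv.Perm Ω) ω₀ = γ := by
        rw [hγ, add_eq]
        simp [Equiv.Perm.mul_apply, haω b]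
      calc (h : Equiv.Perm Ω) ω₀
          = (((aelt γ)⁻¹ : G) : Equiv.Perm Ω) (((aelt a * aelt b : G) : Equiv.Perm Ω) ω₀)
            := by simp [hh, Equiv.Perm.mul_apply]
      _ = (((aelt γ)⁻¹ : G) : Equiv.Perm Ω) (((aelt γ : G) : Equiv.Perm Ω) ω₀) := by
            rw [h1, haω γ]
      _ = ω₀ := by simp
    refine ⟨(h : Equiv.Perm Ω) ω₁, ?_, ?_⟩
    · intro hcon
      apply hω
      have : (h : Equiv.Perm Ω) ω₁ = (h : Equiv.Perm Ω) ω₀ := by rw [hcon, hh0]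
      exact ((h : Equiv.Perm Ω).injective this).symm
    · intro x
      rw [mul_eq h hh0, add_eq b, add_eq a, add_eq γ]
      have : (aelt γ : G) * h = aelt a * aelt b := by
        rw [hh, mul_inv_cancel_left]
      symm
      calc ((aelt γ : G) : Equiv.Perm Ω) ((h : Equiv.Perm Ω) x)
          = (((aelt γ * h : G)) : Equiv.Perm Ω) x := by simp [Equiv.Perm.mul_apply]
      _ = ((aelt a * aelt b : G) : Equiv.Perm Ω) x := by rw [this]
      _ = ((aelt a : G) : Equiv.Perm Ω) (((aelt b : G) : Equiv.Perm Ω) x) := by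
            simp [Equiv.Perm.mul_apply]
  refine ⟨⟨add, mul, ω₀, ω₁, f_zero_add, f_add_zero, f_addL, f_addR, f_neg_comm,
    hω.symm, f_mul_ne_zero, f_mul_assoc, fun a _ => f_one_mul a, f_mul_one, f_inv_ex,
    hmul0, f_left_distrib, f_d_ex⟩, rfl, rfl, rfl, rfl⟩
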